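/- Let A be a diagonalizable operator on a Hilbert space X given by A = Σ_i λ_i ⟨·, ψ_i⟩ φ_i with respect to a Riesz basis (φ_i) with distinct eigenvalues λ_i, and let V be a closed subspace that is invariant under (λI − A)^{-1} for some λ in the resolvent set. Then V is the closed span of the eigenvectors φ_i that it contains: V = closure(span{φ_i : φ_i ∈ V}). -/

import Mathlib

open RealInnerProductSpace

section AuxRS

open Polynomial in
lemma auxRS_weierstrass (a b : ℝ) (f : C(Set.Icc a b, ℝ)) {δ : ℝ} (hδ : 0 < δ) :
    ∃ p : Polynomial ℝ, ∀ t : Set.Icc a b, |p.eval (t : ℝ) - f t| ≤ δ := by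
  have h := polynomialFunctions_closure_eq_top a b
  have hf : f ∈ closure ((polynomialFunctions (Set.Icc a b)) : Set C(Set.Icc a b, ℝ)) := by
    have h2 : f ∈ (polynomialFunctions (Set.Icc a b)).topologicalClosure := by rw [h]; trivial
    exact h2
  obtain ⟨g, hg, hgf⟩ := Metric.mem_closure_iff.mp hf δ hδ
  rw [polynomialFunctions_coe] at hg
  obtain ⟨p, rfl⟩ := hg
  refine ⟨p, fun t => ?_⟩
  have h3 : dist (f t) ((p.toContinuousMapOnAlgHom _) t) ≤ dist f (p.toContinuousMapOnAlgHom _) :=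
    ContinuousMap.dist_apply_le_dist t
  have h4 : |p.eval (t:ℝ) - f t| = dist (f t) ((p.toContinuousMapOnAlgHom _) t) := by
    rw [Real.dist_eq, abs_sub_comm]
    congr 1
  rw [h4]
  exact h3.trans (le_of_lt hgf)

lemma auxRS_CS (s : Finset ℕ) (f g : ℕ → ℝ) :
    ∑ k ∈ s, f k * g k ≤ Real.sqrt (∑ k ∈ s, f k ^ 2) * Real.sqrt (∑ k ∈ s, g k ^ 2) := by
  have h := Finset.sum_mul_sq_le_sq_mul_sq s f g
  calc ∑ k ∈ s, f k * g k ≤ |∑ k ∈ s, f k * g k| := le_abs_self _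
    _ = Real.sqrt ((∑ k ∈ s, f k * g k)^2) := (Real.sqrt_sq_eq_abs _).symm
    _ ≤ Real.sqrt ((∑ k ∈ s, f k^2) * ∑ k ∈ s, g k^2) := Real.sqrt_le_sqrt h
    _ = _ := Real.sqrt_mul (Finset.sum_nonneg fun i _ => sq_nonneg _) _

variable {X : Type*} [NormedAddCommGroup X] [InnerProductSpace ℝ X]
  {φ ψ : ℕ → X}

lemma auxRS_coord (hbi : ∀ i k : ℕ, ⟪ψ i, φ k⟫ = if i = k then (1:ℝ) else 0)
    (a : ℕ → ℝ) (y : X) (hy : HasSum (fun k => a k • φ k) y) (j : ℕ) :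
    ⟪y, ψ j⟫ = a j := by
  have h1 : HasSum (fun k => ⟪ψ j, a k • φ k⟫) ⟪ψ j, y⟫ := (innerSL ℝ (ψ j)).hasSum hy
  have h2 : (fun k => ⟪ψ j, a k • φ k⟫) = fun k => if k = j then a j else 0 := by
    funext k
    rw [real_inner_smul_right, hbi]
    by_cases h : j = k
    · subst h; simp
    · simp [h, Ne.symm h]
  rw [h2] at h1
  rw [real_inner_comm]
  exact (h1.unique (hasSum_ite_eq j (a j)))

lemma auxRS_upper {M₂ : ℝ}
    (hriesz2 : ∀ (n : ℕ) (α : ℕ → ℝ),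
      ‖∑ k ∈ Finset.range n, α k • φ k‖ ^ 2 ≤ M₂ * ∑ k ∈ Finset.range n, (α k) ^ 2)
    (F : Finset ℕ) (a : ℕ → ℝ) :
    ‖∑ k ∈ F, a k • φ k‖ ^ 2 ≤ M₂ * ∑ k ∈ F, (a k) ^ 2 := by
  set n := (F.sup id) + 1 with hn
  have hF : F ⊆ Finset.range n := fun k hk =>
    Finset.mem_range.mpr (Nat.lt_succ_of_le (Finset.le_sup (f := id) hk))
  set α : ℕ → ℝ := fun k => if k ∈ F then a k else 0 with hα
  have h1 : ∑ k ∈ Finset.range n, α k • φ k = ∑ k ∈ F, a k • φ k := by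
    have : ∀ k, α k • φ k = if k ∈ F then a k • φ k else 0 := by
      intro k; by_cases h : k ∈ F <;> simp [hα, h]
    simp_rw [this]
    rw [Finset.sum_ite_mem, Finset.inter_eq_right.mpr hF]
  have h2 : ∑ k ∈ Finset.range n, (α k) ^ 2 = ∑ k ∈ F, (a k) ^ 2 := by
    have : ∀ k, (α k) ^ 2 = if k ∈ F then (a k) ^ 2 else 0 := by
      intro k; by_cases h : k ∈ F <;> simp [hα, h]
    simp_rw [this]
    rw [Finset.sum_ite_mem, Finset.inter_eq_right.mpr hF]
  have := hriesz2 n α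
  rw [h1, h2] at this
  exact this

lemma auxRS_CS' (s : Finset ℕ) (f g : ℕ → ℝ) :
    ∑ k ∈ s, f k * g k ≤ Real.sqrt (∑ k ∈ s, f k ^ 2) * Real.sqrt (∑ k ∈ s, g k ^ 2) := by
  have h := Finset.sum_mul_sq_le_sq_mul_sq s f g
  calc ∑ k ∈ s, f k * g k ≤ |∑ k ∈ s, f k * g k| := le_abs_self _
    _ = Real.sqrt ((∑ k ∈ s, f k * g k)^2) := (Real.sqrt_sq_eq_abs _).symm
    _ ≤ Real.sqrt ((∑ k ∈ s, f k^2) * ∑ k ∈ s, g k^2) := Real.sqrt_le_sqrt h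
    _ = _ := Real.sqrt_mul (Finset.sum_nonneg fun i _ => sq_nonneg _) _

lemma auxRS_dense (hspan : (Submodule.span ℝ (Set.range φ)).topologicalClosure = ⊤)
    (u : X) {ε : ℝ} (hε : 0 < ε) :
    ∃ v ∈ Submodule.span ℝ (Set.range φ), ‖u - v‖ < ε := by
  have hu : u ∈ closure ((Submodule.span ℝ (Set.range φ) : Submodule ℝ X) : Set X) := by
    rw [← Submodule.topologicalClosure_coe, hspan]; trivial
  obtain ⟨v, hv, hd⟩ := Metric.mem_closure_iff.mp hu ε hε
  exact ⟨v, hv, by rwa [← dist_eq_norm]⟩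

lemma auxRS_inner_span (hbi : ∀ i k : ℕ, ⟪ψ i, φ k⟫ = if i = k then (1:ℝ) else 0)
    {M₁ : ℝ} (hM₁ : 0 < M₁)
    (hrl : ∀ (n : ℕ) (α : ℕ → ℝ),
      M₁ * ∑ k ∈ Finset.range n, (α k) ^ 2 ≤ ‖∑ k ∈ Finset.range n, α k • φ k‖ ^ 2)
    (n : ℕ) (a : ℕ → ℝ) (v : X) (hv : v ∈ Submodule.span ℝ (Set.range φ)) :
    ⟪∑ k ∈ Finset.range n, a k • ψ k, v⟫
      ≤ Real.sqrt ((∑ k ∈ Finset.range n, (a k)^2) / M₁) * ‖v‖ := by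
  obtain ⟨d, rfl⟩ := Finsupp.mem_span_range_iff_exists_finsupp.mp hv
  set m := (d.support.sup id) + 1 with hm
  have hsubset : d.support ⊆ Finset.range m := fun k hk =>
    Finset.mem_range.mpr (Nat.lt_succ_of_le (Finset.le_sup (f := id) hk))
  have hvm : (d.sum fun i t => t • φ i) = ∑ k ∈ Finset.range m, d k • φ k := by
    rw [Finsupp.sum]
    refine Finset.sum_subset hsubset ?_
    intro k _ hk
    rw [Finsupp.notMem_support_iff.mp hk, zero_smul]
  rw [hvm]
  have hinner : ⟪∑ k ∈ Finset.range n, a k • ψ k, ∑ k ∈ Finset.range m, d k • φ k⟫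
      = ∑ k ∈ Finset.range n ∩ Finset.range m, a k * d k := by
    rw [sum_inner]
    have h1 : ∀ k, ⟪a k • ψ k, ∑ j ∈ Finset.range m, d j • φ j⟫
        = if k ∈ Finset.range m then a k * d k else 0 := by
      intro k
      rw [real_inner_smul_left, inner_sum]
      have h2 : ∀ j, ⟪ψ k, d j • φ j⟫ = if k = j then d j else 0 := by
        intro j
        rw [real_inner_smul_right, hbi]
        by_cases h : k = j <;> simp [h]
      simp_rw [h2]
      rw [Finset.sum_ite_eq]
      by_cases h : k ∈ Finset.range m <;> simp [h]
    simp_rw [h1]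
    rw [Finset.sum_ite_mem]
  rw [hinner]
  set s := Finset.range n ∩ Finset.range m with hs
  have hCS := auxRS_CS' s a d
  have hmono1 : ∑ k ∈ s, (a k)^2 ≤ ∑ k ∈ Finset.range n, (a k)^2 :=
    Finset.sum_le_sum_of_subset_of_nonneg Finset.inter_subset_left
      (fun i _ _ => sq_nonneg _)
  have hmono2 : ∑ k ∈ s, (d k)^2 ≤ ∑ k ∈ Finset.range m, (d k)^2 :=
    Finset.sum_le_sum_of_subset_of_nonneg Finset.inter_subset_right
      (fun i _ _ => sq_nonneg _)
  have hnorm : Real.sqrt (∑ k ∈ Finset.range m, (d k)^2)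
      ≤ ‖∑ k ∈ Finset.range m, d k • φ k‖ / Real.sqrt M₁ := by
    have h3 := hrl m d
    have h4 : ∑ k ∈ Finset.range m, (d k)^2
        ≤ ‖∑ k ∈ Finset.range m, d k • φ k‖^2 / M₁ := by
      rw [le_div_iff₀ hM₁]; linarith
    calc Real.sqrt (∑ k ∈ Finset.range m, (d k)^2)
        ≤ Real.sqrt (‖∑ k ∈ Finset.range m, d k • φ k‖^2 / M₁) := Real.sqrt_le_sqrt h4
      _ = ‖∑ k ∈ Finset.range m, d k • φ k‖ / Real.sqrt M₁ := by
          rw [Real.sqrt_div (sq_nonneg _), Real.sqrt_sq (norm_nonneg _)]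
  calc ∑ k ∈ s, a k * d k
      ≤ Real.sqrt (∑ k ∈ s, (a k)^2) * Real.sqrt (∑ k ∈ s, (d k)^2) := hCS
    _ ≤ Real.sqrt (∑ k ∈ Finset.range n, (a k)^2)
        * (‖∑ k ∈ Finset.range m, d k • φ k‖ / Real.sqrt M₁) := by
        refine mul_le_mul (Real.sqrt_le_sqrt hmono1)
          ((Real.sqrt_le_sqrt hmono2).trans hnorm) (Real.sqrt_nonneg _) (Real.sqrt_nonneg _)
    _ = Real.sqrt ((∑ k ∈ Finset.range n, (a k)^2) / M₁)
        * ‖∑ k ∈ Finset.range m, d k • φ k‖ := by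
        rw [Real.sqrt_div (Finset.sum_nonneg fun i _ => sq_nonneg _)]
        ring

lemma auxRS_psi_norm (hbi : ∀ i k : ℕ, ⟪ψ i, φ k⟫ = if i = k then (1:ℝ) else 0)
    (hspan : (Submodule.span ℝ (Set.range φ)).topologicalClosure = ⊤)
    {M₁ : ℝ} (hM₁ : 0 < M₁)
    (hrl : ∀ (n : ℕ) (α : ℕ → ℝ),
      M₁ * ∑ k ∈ Finset.range n, (α k) ^ 2 ≤ ‖∑ k ∈ Finset.range n, α k • φ k‖ ^ 2)
    (n : ℕ) (a : ℕ → ℝ) :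
    ‖∑ k ∈ Finset.range n, a k • ψ k‖^2 ≤ (∑ k ∈ Finset.range n, (a k)^2) / M₁ := by
  set u := ∑ k ∈ Finset.range n, a k • ψ k with hu
  set s := Real.sqrt ((∑ k ∈ Finset.range n, (a k)^2) / M₁) with hsdef
  have hsum0 : 0 ≤ (∑ k ∈ Finset.range n, (a k)^2) / M₁ :=
    div_nonneg (Finset.sum_nonneg fun i _ => sq_nonneg _) hM₁.le
  have hs0 : 0 ≤ s := Real.sqrt_nonneg _
  have key : ‖u‖ ≤ s := by
    rcases eq_or_lt_of_le (norm_nonneg u) with h0 | h0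
    · rw [← h0]; exact hs0
    have main : ∀ ε : ℝ, 0 < ε → ‖u‖^2 ≤ s * ‖u‖ + (s + ‖u‖) * ε := by
      intro ε hε
      obtain ⟨v, hv, hvu⟩ := auxRS_dense hspan u hε
      have h1 : ⟪u, v⟫ ≤ s * ‖v‖ := auxRS_inner_span hbi hM₁ hrl n a v hv
      have h2 : ⟪u, u - v⟫ ≤ ‖u‖ * ε := by
        refine (real_inner_le_norm _ _).trans ?_
        exact mul_le_mul_of_nonneg_left hvu.le (norm_nonneg _)
      have h3 : ‖v‖ ≤ ‖u‖ + ε := by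
        have h := norm_sub_norm_le v u
        have h' : ‖v - u‖ = ‖u - v‖ := norm_sub_rev _ _
        linarith [h, h'.le, hvu.le, h'.ge]
      have h4 : ‖u‖^2 = ⟪u, v⟫ + ⟪u, u - v⟫ := by
        rw [← real_inner_self_eq_norm_sq, inner_sub_right]
        ring
      nlinarith
    have h5 : ‖u‖^2 ≤ s * ‖u‖ := by
      refine le_of_forall_pos_le_add fun ε hε => ?_
      have hden : (0:ℝ) < s + ‖u‖ + 1 := by linarith [norm_nonneg u]
      have hm := main (ε / (s + ‖u‖ + 1)) (by positivity)
      have hd : (s + ‖u‖) * (ε / (s + ‖u‖ + 1)) ≤ ε := by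
        rw [mul_div_assoc']
        rw [div_le_iff₀ hden]
        nlinarith [norm_nonneg u]
      linarith
    nlinarith
  calc ‖u‖^2 ≤ s^2 := by nlinarith [norm_nonneg u]
    _ = _ := Real.sq_sqrt hsum0

lemma auxRS_bessel (hbi : ∀ i k : ℕ, ⟪ψ i, φ k⟫ = if i = k then (1:ℝ) else 0)
    (hspan : (Submodule.span ℝ (Set.range φ)).topologicalClosure = ⊤)
    {M₁ : ℝ} (hM₁ : 0 < M₁)
    (hrl : ∀ (n : ℕ) (α : ℕ → ℝ),
      M₁ * ∑ k ∈ Finset.range n, (α k) ^ 2 ≤ ‖∑ k ∈ Finset.range n, α k • φ k‖ ^ 2)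
    (x : X) (n : ℕ) :
    ∑ k ∈ Finset.range n, ⟪x, ψ k⟫^2 ≤ ‖x‖^2 / M₁ := by
  set s := ∑ k ∈ Finset.range n, ⟪x, ψ k⟫^2 with hs
  have hs0 : 0 ≤ s := Finset.sum_nonneg fun i _ => sq_nonneg _
  have h1 : s = ⟪x, ∑ k ∈ Finset.range n, ⟪x, ψ k⟫ • ψ k⟫ := by
    rw [inner_sum]
    refine Finset.sum_congr rfl fun k _ => ?_
    rw [real_inner_smul_right]
    ring
  have hpn := auxRS_psi_norm hbi hspan hM₁ hrl n (fun k => ⟪x, ψ k⟫)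
  have h2 : ‖∑ k ∈ Finset.range n, ⟪x, ψ k⟫ • ψ k‖ ≤ Real.sqrt (s / M₁) := by
    have h := Real.sqrt_le_sqrt hpn
    rwa [Real.sqrt_sq (norm_nonneg _)] at h
  have h3 : s ≤ ‖x‖ * Real.sqrt (s / M₁) := by
    conv_lhs => rw [h1]
    exact (real_inner_le_norm _ _).trans (mul_le_mul_of_nonneg_left h2 (norm_nonneg _))
  rcases eq_or_lt_of_le hs0 with h0 | h0
  · rw [← h0]; positivity
  have h5 : (Real.sqrt (s/M₁))^2 = s/M₁ := Real.sq_sqrt (div_nonneg hs0 hM₁.le)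
  have h4 := mul_self_le_mul_self hs0 h3
  have h7 : (‖x‖ * Real.sqrt (s/M₁)) * (‖x‖ * Real.sqrt (s/M₁)) = ‖x‖^2 * (s/M₁) := by
    calc (‖x‖ * Real.sqrt (s/M₁)) * (‖x‖ * Real.sqrt (s/M₁))
        = ‖x‖^2 * (Real.sqrt (s/M₁))^2 := by ring
      _ = ‖x‖^2 * (s/M₁) := by rw [h5]
  have h8 : ‖x‖^2 * (s/M₁) = (‖x‖^2/M₁) * s := by ring
  have h6 : s * s ≤ (‖x‖^2/M₁) * s := by linarith
  exact le_of_mul_le_mul_right h6 h0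

end AuxRS

set_option maxHeartbeats 2000000 in
/-- For a Riesz-spectral (diagonalizable) operator with distinct eigenvalues, every
closed subspace invariant under the resolvent is the closed span of the eigenvectors
it contains. -/
theorem resolvent_invariant_subspace_is_spanned_by_eigenvectors
    {X : Type*} [NormedAddCommGroup X] [InnerProductSpace ℝ X] [CompleteSpace X]
    (φ ψ : ℕ → X)
    (hbi : ∀ i k : ℕ, ⟪ψ i, φ k⟫ = if i = k then (1 : ℝ) else 0)
    (hspan : (Submodule.span ℝ (Set.range φ)).topologicalClosure = ⊤)
    (M₁ M₂ : ℝ) (hM₁ : 0 < M₁) (hM₁₂ : M₁ ≤ M₂)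
    (hriesz : ∀ (n : ℕ) (α : ℕ → ℝ),
      M₁ * ∑ k ∈ Finset.range n, (α k) ^ 2
        ≤ ‖∑ k ∈ Finset.range n, α k • φ k‖ ^ 2 ∧
      ‖∑ k ∈ Finset.range n, α k • φ k‖ ^ 2
        ≤ M₂ * ∑ k ∈ Finset.range n, (α k) ^ 2)
    (lam : ℕ → ℝ) (hdistinct : Function.Injective lam)
    (hsup : BddAbove (Set.range lam))
    (μ : ℝ) (hμ : ∀ i : ℕ, μ ≠ lam i)
    (R : X →L[ℝ] X)
    (hR : ∀ x : X, HasSum (fun i : ℕ => ((μ - lam i)⁻¹ * ⟪x, ψ i⟫) • φ i) (R x))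
    (V : Submodule ℝ X) (hVclosed : IsClosed (V : Set X))
    (hRV : ∀ x ∈ V, R x ∈ V) :
    V = (Submodule.span ℝ (φ '' {i : ℕ | φ i ∈ V})).topologicalClosure := by

  classical
  have hM₂ : (0:ℝ) < M₂ := lt_of_lt_of_le hM₁ hM₁₂
  have hrl : ∀ (n : ℕ) (α : ℕ → ℝ),
      M₁ * ∑ k ∈ Finset.range n, (α k) ^ 2 ≤ ‖∑ k ∈ Finset.range n, α k • φ k‖ ^ 2 :=
    fun n α => (hriesz n α).1
  have hru : ∀ (n : ℕ) (α : ℕ → ℝ),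
      ‖∑ k ∈ Finset.range n, α k • φ k‖ ^ 2 ≤ M₂ * ∑ k ∈ Finset.range n, (α k) ^ 2 :=
    fun n α => (hriesz n α).2
  set r : ℕ → ℝ := fun k => (μ - lam k)⁻¹ with hrdef
  have hR' : ∀ x : X, HasSum (fun k : ℕ => (r k * ⟪x, ψ k⟫) • φ k) (R x) := fun x => hR x
  -- summability of coefficients
  have hsummable : ∀ x : X, Summable (fun k => ⟪x, ψ k⟫^2) :=
    fun x => summable_of_sum_range_le (fun n => sq_nonneg _)
      (fun n => auxRS_bessel hbi hspan hM₁ hrl x n)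
  -- uniform bound on partial sum operators
  have hSnorm : ∀ (z : X) (n : ℕ),
      ‖∑ k ∈ Finset.range n, ⟪z, ψ k⟫ • φ k‖ ≤ Real.sqrt (M₂/M₁) * ‖z‖ := by
    intro z n
    have h1 := hru n (fun k => ⟪z, ψ k⟫)
    have h2 := auxRS_bessel hbi hspan hM₁ hrl z n
    have h3 : ‖∑ k ∈ Finset.range n, ⟪z, ψ k⟫ • φ k‖^2 ≤ (M₂/M₁) * ‖z‖^2 := by
      refine h1.trans ?_
      have h4 : M₂ * ∑ k ∈ Finset.range n, ⟪z, ψ k⟫^2 ≤ M₂ * (‖z‖^2/M₁) :=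
        mul_le_mul_of_nonneg_left h2 hM₂.le
      refine h4.trans (le_of_eq ?_)
      ring
    have h4 := Real.sqrt_le_sqrt h3
    rwa [Real.sqrt_sq (norm_nonneg _),
      Real.sqrt_mul (div_nonneg hM₂.le hM₁.le), Real.sqrt_sq (norm_nonneg z)] at h4
  -- finite sums of basis vectors as HasSum
  have hfinsum : ∀ (m : ℕ) (d : ℕ → ℝ),
      HasSum (fun k => (if k < m then d k else 0) • φ k)
        (∑ k ∈ Finset.range m, d k • φ k) := by
    intro m d
    have h := hasSum_sum_of_ne_finset_zero (L := .unconditional _) (s := Finset.range m)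
      (f := fun k => (if k < m then d k else 0) • φ k)
      (by intro k hk
          have hklt : ¬ k < m := by simpa using hk
          simp [hklt])
    have hval : ∑ k ∈ Finset.range m, (if k < m then d k else 0) • φ k
        = ∑ k ∈ Finset.range m, d k • φ k :=
      Finset.sum_congr rfl (fun k hk => by rw [if_pos (Finset.mem_range.mp hk)])
    rwa [hval] at h
  -- reproduction of span elements by partial sums
  have hrepro : ∀ v ∈ Submodule.span ℝ (Set.range φ),
      ∃ m : ℕ, ∀ n, m ≤ n → ∑ k ∈ Finset.range n, ⟪v, ψ k⟫ • φ k = v := by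
    intro v hv
    obtain ⟨d, rfl⟩ := Finsupp.mem_span_range_iff_exists_finsupp.mp hv
    set m := (d.support.sup id) + 1 with hm
    have hsubset : d.support ⊆ Finset.range m := fun k hk =>
      Finset.mem_range.mpr (Nat.lt_succ_of_le (Finset.le_sup (f := id) hk))
    have hvm : (d.sum fun i t => t • φ i) = ∑ k ∈ Finset.range m, d k • φ k := by
      rw [Finsupp.sum]
      refine Finset.sum_subset hsubset ?_
      intro k _ hk
      rw [Finsupp.notMem_support_iff.mp hk, zero_smul]
    have hhsv : HasSum (fun k => (if k < m then d k else 0) • φ k)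
        (d.sum fun i t => t • φ i) := by rw [hvm]; exact hfinsum m d
    have hcoord : ∀ j, ⟪(d.sum fun i t => t • φ i), ψ j⟫ = if j < m then d j else 0 :=
      fun j => auxRS_coord hbi _ _ hhsv j
    refine ⟨m, fun n hmn => ?_⟩
    have h1 : ∑ k ∈ Finset.range n, ⟪(d.sum fun i t => t • φ i), ψ k⟫ • φ k
        = ∑ k ∈ Finset.range n, (if k < m then d k else 0) • φ k :=
      Finset.sum_congr rfl (fun k _ => by rw [hcoord k])
    have h2 : ∑ k ∈ Finset.range n, (if k < m then d k else 0) • φ k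
        = ∑ k ∈ Finset.range m, d k • φ k := by
      refine (Finset.sum_subset (Finset.range_subset_range.mpr hmn) ?_).symm.trans ?_
      · intro k _ hk
        rw [if_neg (by simpa using hk), zero_smul]
      · exact Finset.sum_congr rfl (fun k hk => by rw [if_pos (Finset.mem_range.mp hk)])
    rw [h1, h2, hvm]
  -- convergence of the expansion
  have htendsto : ∀ x : X, Filter.Tendsto (fun n => ∑ k ∈ Finset.range n, ⟪x, ψ k⟫ • φ k)
      Filter.atTop (nhds x) := by
    intro x
    rw [Metric.tendsto_atTop]
    intro ε hε
    set C := Real.sqrt (M₂/M₁) with hC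
    have hC0 : 0 ≤ C := Real.sqrt_nonneg _
    have hεd : 0 < ε/(C+2) := by positivity
    obtain ⟨v, hv, hxv⟩ := auxRS_dense hspan x hεd
    obtain ⟨m, hm⟩ := hrepro v hv
    refine ⟨m, fun n hn => ?_⟩
    rw [dist_eq_norm]
    have hlin : ∑ k ∈ Finset.range n, ⟪x, ψ k⟫ • φ k
        - ∑ k ∈ Finset.range n, ⟪v, ψ k⟫ • φ k
        = ∑ k ∈ Finset.range n, ⟪x - v, ψ k⟫ • φ k := by
      rw [← Finset.sum_sub_distrib]
      exact Finset.sum_congr rfl (fun k _ => by rw [inner_sub_left, sub_smul])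
    have hsplit : ∑ k ∈ Finset.range n, ⟪x, ψ k⟫ • φ k - x
        = (∑ k ∈ Finset.range n, ⟪x - v, ψ k⟫ • φ k) + (v - x) := by
      rw [← hlin, hm n hn]
      abel
    have hb := hSnorm (x - v) n
    have hstep : ‖∑ k ∈ Finset.range n, ⟪x, ψ k⟫ • φ k - x‖ ≤ (C+1) * ‖x - v‖ := by
      rw [hsplit]
      refine (norm_add_le _ _).trans ?_
      rw [norm_sub_rev v x]
      linarith
    have hfin : (C+1) * ‖x - v‖ < ε := by
      have h5 : (C+1) * ‖x - v‖ < (C+1) * (ε/(C+2)) :=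
        mul_lt_mul_of_pos_left hxv (by linarith)
      have h6 : (C+1) * (ε/(C+2)) ≤ ε := by
        rw [mul_div_assoc']
        rw [div_le_iff₀ (by linarith : (0:ℝ) < C+2)]
        nlinarith
      linarith
    linarith
  -- unconditional convergence
  have hhs : ∀ x : X, HasSum (fun k => ⟪x, ψ k⟫ • φ k) x := by
    intro x
    have hSx := hsummable x
    show Filter.Tendsto (fun F : Finset ℕ => ∑ k ∈ F, ⟪x, ψ k⟫ • φ k)
      Filter.atTop (nhds x)
    rw [Metric.tendsto_atTop]
    intro ε hε
    obtain ⟨N₁, hN₁⟩ := Metric.tendsto_atTop.mp (htendsto x) (ε/2) (by linarith)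
    have hβ : (0:ℝ) < (ε/2)^2/M₂ := by positivity
    obtain ⟨N₂, hN₂⟩ := Metric.tendsto_atTop.mp hSx.hasSum.tendsto_sum_nat _ hβ
    set N := max N₁ N₂ with hN
    refine ⟨Finset.range N, fun F hF => ?_⟩
    rw [dist_eq_norm]
    have hFsub : Finset.range N ⊆ F := hF
    have hsplit : ∑ k ∈ F, ⟪x, ψ k⟫ • φ k
        = (∑ k ∈ F \ Finset.range N, ⟪x, ψ k⟫ • φ k)
          + ∑ k ∈ Finset.range N, ⟪x, ψ k⟫ • φ k := (Finset.sum_sdiff hFsub).symm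
    have htail : ∑ k ∈ F \ Finset.range N, ⟪x, ψ k⟫^2 ≤ (ε/2)^2/M₂ := by
      have hsq := Finset.sum_sdiff (f := fun k => ⟪x, ψ k⟫^2) hFsub
      have hFle : ∑ k ∈ F, ⟪x, ψ k⟫^2 ≤ ∑' k, ⟪x, ψ k⟫^2 :=
        Summable.sum_le_tsum F (fun i _ => sq_nonneg _) hSx
      have hdist := hN₂ N (le_max_right _ _)
      rw [Real.dist_eq] at hdist
      have habs := abs_lt.mp hdist
      linarith [habs.1, habs.2]
    have h1 : ‖∑ k ∈ F \ Finset.range N, ⟪x, ψ k⟫ • φ k‖ ≤ ε/2 := by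
      have h2 := auxRS_upper hru (F \ Finset.range N) (fun k => ⟪x, ψ k⟫)
      have h3 : ‖∑ k ∈ F \ Finset.range N, ⟪x, ψ k⟫ • φ k‖^2 ≤ (ε/2)^2 := by
        refine h2.trans ?_
        have := mul_le_mul_of_nonneg_left htail hM₂.le
        calc M₂ * ∑ k ∈ F \ Finset.range N, ⟪x, ψ k⟫^2 ≤ M₂ * ((ε/2)^2/M₂) := this
          _ = (ε/2)^2 := by field_simp
      have h4 := Real.sqrt_le_sqrt h3
      rwa [Real.sqrt_sq (norm_nonneg _), Real.sqrt_sq (by linarith : (0:ℝ) ≤ ε/2)] at h4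
    have h5 : ‖∑ k ∈ Finset.range N, ⟪x, ψ k⟫ • φ k - x‖ < ε/2 := by
      have := hN₁ N (le_max_left _ _)
      rwa [dist_eq_norm] at this
    calc ‖∑ k ∈ F, ⟪x, ψ k⟫ • φ k - x‖
        = ‖(∑ k ∈ F \ Finset.range N, ⟪x, ψ k⟫ • φ k)
            + (∑ k ∈ Finset.range N, ⟪x, ψ k⟫ • φ k - x)‖ := by rw [hsplit, add_sub_assoc]
      _ ≤ ‖∑ k ∈ F \ Finset.range N, ⟪x, ψ k⟫ • φ k‖
            + ‖∑ k ∈ Finset.range N, ⟪x, ψ k⟫ • φ k - x‖ := norm_add_le _ _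
      _ < ε := by linarith
  -- action of R on expansions
  have hRstep : ∀ (a : ℕ → ℝ) (y : X), HasSum (fun k => a k • φ k) y →
      HasSum (fun k => (r k * a k) • φ k) (R y) := by
    intro a y hy
    have h := hR' y
    have heq : (fun k => (r k * ⟪y, ψ k⟫) • φ k) = fun k => (r k * a k) • φ k := by
      funext k
      rw [auxRS_coord hbi a y hy k]
    rwa [heq] at h
  -- powers of R
  have hpow : ∀ x, x ∈ V → ∀ j : ℕ, ∃ y, y ∈ V ∧
      HasSum (fun k => ((r k)^j * ⟪x, ψ k⟫) • φ k) y := by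
    intro x hx j
    induction j with
    | zero =>
      refine ⟨x, hx, ?_⟩
      have h := hhs x
      have heq : (fun k => ⟪x, ψ k⟫ • φ k) = fun k => ((r k)^0 * ⟪x, ψ k⟫) • φ k := by
        funext k; rw [pow_zero, one_mul]
      rwa [heq] at h
    | succ j ih =>
      obtain ⟨y, hyV, hy⟩ := ih
      refine ⟨R y, hRV y hyV, ?_⟩
      have h := hRstep _ _ hy
      have heq : (fun k => (r k * ((r k)^j * ⟪x, ψ k⟫)) • φ k)
          = fun k => ((r k)^(j+1) * ⟪x, ψ k⟫) • φ k := by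
        funext k; congr 1; ring
      rwa [heq] at h
  -- polynomials of R
  have hpoly : ∀ x, x ∈ V → ∀ p : Polynomial ℝ, ∃ y, y ∈ V ∧
      HasSum (fun k => (p.eval (r k) * ⟪x, ψ k⟫) • φ k) y := by
    intro x hx p
    choose y hyV hy using hpow x hx
    set N := p.natDegree + 1 with hNdef
    refine ⟨∑ j ∈ Finset.range N, p.coeff j • y j,
      Submodule.sum_mem V (fun j _ => Submodule.smul_mem V _ (hyV j)), ?_⟩
    have h := hasSum_sum (s := Finset.range N)
      (f := fun j k => p.coeff j • (((r k)^j * ⟪x, ψ k⟫) • φ k))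
      (a := fun j => p.coeff j • y j)
      (fun j _ => (hy j).const_smul (p.coeff j))
    have heq : (fun k => ∑ j ∈ Finset.range N, p.coeff j • (((r k)^j * ⟪x, ψ k⟫) • φ k))
        = fun k => (p.eval (r k) * ⟪x, ψ k⟫) • φ k := by
      funext k
      have h1 : ∀ j, p.coeff j • (((r k)^j * ⟪x, ψ k⟫) • φ k)
          = (p.coeff j * (r k)^j * ⟪x, ψ k⟫) • φ k := by
        intro j; rw [smul_smul]; ring_nf
      simp_rw [h1]
      rw [← Finset.sum_smul, ← Finset.sum_mul]
      congr 2
      rw [Polynomial.eval_eq_sum_range]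
    rwa [heq] at h
  -- eigenvectors and bound on r
  have hφne : ∀ k, φ k ≠ 0 := by
    intro k hk
    have h := hbi k k
    rw [hk, inner_zero_right] at h
    simp at h
  have hφψ : ∀ k j, ⟪φ k, ψ j⟫ = if j = k then (1:ℝ) else 0 := by
    intro k j; rw [real_inner_comm]; exact hbi j k
  have hRφ : ∀ k, R (φ k) = r k • φ k := by
    intro k
    have h := hR' (φ k)
    have heq : (fun i => (r i * ⟪φ k, ψ i⟫) • φ i)
        = fun i => if i = k then r k • φ k else 0 := by
      funext i
      rw [hφψ]
      by_cases h : i = k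
      · subst h; simp
      · simp [h]
    rw [heq] at h
    exact h.unique (hasSum_ite_eq k (r k • φ k))
  have hrbound : ∀ k, |r k| ≤ ‖R‖ := by
    intro k
    have h1 : ‖R (φ k)‖ ≤ ‖R‖ * ‖φ k‖ := R.le_opNorm _
    rw [hRφ, norm_smul, Real.norm_eq_abs] at h1
    have hpos : 0 < ‖φ k‖ := norm_pos_iff.mpr (hφne k)
    exact le_of_mul_le_mul_right h1 hpos
  have hrinj : Function.Injective r := by
    intro a b hab
    have h := inv_injective hab
    apply hdistinct
    have : lam a = lam b := by
      have h2 : μ - lam a = μ - lam b := h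
      linarith
    exact this
  -- norm bound from HasSum expansions
  have hnormSq_le : ∀ (a : ℕ → ℝ) (y : X), HasSum (fun k => a k • φ k) y →
      Summable (fun k => (a k)^2) → ‖y‖^2 ≤ M₂ * ∑' k, (a k)^2 := by
    intro a y hy hs
    have hcont : Continuous (fun z : X => ‖z‖^2) := by continuity
    have h1 : Filter.Tendsto (fun F : Finset ℕ => ‖∑ k ∈ F, a k • φ k‖^2)
        Filter.atTop (nhds (‖y‖^2)) := (hcont.tendsto y).comp hy
    refine le_of_tendsto h1 (Filter.Eventually.of_forall fun F => ?_)
    exact (auxRS_upper hru F a).trans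
      (mul_le_mul_of_nonneg_left (Summable.sum_le_tsum F (fun i _ => sq_nonneg _) hs) hM₂.le)
  -- the key step: eigenvector extraction
  have hkey : ∀ x, x ∈ V → ∀ i : ℕ, ⟪x, ψ i⟫ ≠ 0 → φ i ∈ V := by
    intro x hx i hci
    set e : ℕ → ℝ := fun k => if k = i then (1:ℝ) else 0 with he
    have hSx := hsummable x
    set S := ∑' k, ⟪x, ψ k⟫^2 with hSdef
    have hS0 : 0 ≤ S := tsum_nonneg fun k => sq_nonneg _
    have main : ∀ γ : ℝ, 0 < γ → ∃ z ∈ V, ‖z - ⟪x, ψ i⟫ • φ i‖^2 ≤ M₂ * γ := by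
      intro γ hγ
      obtain ⟨N₀, hN₀⟩ := Metric.tendsto_atTop.mp hSx.hasSum.tendsto_sum_nat (γ/4)
        (by linarith)
      set N := max N₀ (i+1) with hNdef
      have hiN : i < N := lt_of_lt_of_le (Nat.lt_succ_self i) (le_max_right _ _)
      have htail : S - ∑ k ∈ Finset.range N, ⟪x, ψ k⟫^2 ≤ γ/4 := by
        have hd := hN₀ N (le_max_left _ _)
        rw [Real.dist_eq] at hd
        have habs := abs_lt.mp hd
        linarith [habs.1]
      -- the tail sum as a HasSum
      have hfin2 : HasSum (fun k => if k < N then ⟪x, ψ k⟫^2 else 0)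
          (∑ k ∈ Finset.range N, ⟪x, ψ k⟫^2) := by
        have h := hasSum_sum_of_ne_finset_zero (L := .unconditional _) (s := Finset.range N)
          (f := fun k => if k < N then ⟪x, ψ k⟫^2 else 0)
          (by intro k hk
              have hklt : ¬ k < N := by simpa using hk
              simp [hklt])
        have hval : ∑ k ∈ Finset.range N, (if k < N then ⟪x, ψ k⟫^2 else 0)
            = ∑ k ∈ Finset.range N, ⟪x, ψ k⟫^2 :=
          Finset.sum_congr rfl (fun k hk => by rw [if_pos (Finset.mem_range.mp hk)])
        rwa [hval] at h
      have hupperfun : HasSum (fun k => if k < N then 0 else ⟪x, ψ k⟫^2)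
          (S - ∑ k ∈ Finset.range N, ⟪x, ψ k⟫^2) := by
        have h := hSx.hasSum.sub hfin2
        have heq : (fun k => ⟪x, ψ k⟫^2 - (if k < N then ⟪x, ψ k⟫^2 else 0))
            = fun k => if k < N then 0 else ⟪x, ψ k⟫^2 := by
          funext k
          by_cases hk : k < N <;> simp [hk]
        rwa [heq] at h
      -- the separation parameter η
      obtain ⟨η, hηpos, hηle⟩ : ∃ η : ℝ, 0 < η ∧
          ∀ k ∈ (Finset.range N).erase i, η ≤ |r k - r i| := by
        set E := insert (1:ℝ) (((Finset.range N).erase i).image (fun k => |r k - r i|))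
          with hEdef
        have hEne : E.Nonempty := ⟨1, Finset.mem_insert_self _ _⟩
        refine ⟨E.min' hEne, ?_, ?_⟩
        · have hmem := E.min'_mem hEne
          rcases Finset.mem_insert.mp hmem with h | h
          · rw [h]; norm_num
          · obtain ⟨k, hk, hkeq⟩ := Finset.mem_image.mp h
            have hki : k ≠ i := (Finset.mem_erase.mp hk).1
            have hne : r k - r i ≠ 0 := sub_ne_zero.mpr (fun hh => hki (hrinj hh))
            rw [← hkeq]
            exact abs_pos.mpr hne
        · intro k hk
          exact Finset.min'_le _ _
            (Finset.mem_insert_of_mem (Finset.mem_image_of_mem _ hk))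
      -- the bump function
      set f : ℝ → ℝ := fun t => max 0 (1 - |t - r i| / η) with hfdef
      have hfcont : Continuous f :=
        continuous_const.max (continuous_const.sub
          (((continuous_id.sub continuous_const).abs).div_const η))
      have hf0 : ∀ t, 0 ≤ f t := fun t => le_max_left _ _
      have hf1 : ∀ t, f t ≤ 1 := by
        intro t
        refine max_le (by norm_num) ?_
        have : 0 ≤ |t - r i| / η := div_nonneg (abs_nonneg _) hηpos.le
        linarith
      have hfi : f (r i) = 1 := by
        rw [hfdef]
        simp
      have hfz : ∀ t, η ≤ |t - r i| → f t = 0 := by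
        intro t ht
        rw [hfdef]
        have h1 : (1:ℝ) ≤ |t - r i| / η := (one_le_div hηpos).mpr ht
        simp only [max_eq_left_iff]
        linarith
      -- the polynomial approximation
      set δ := min 1 (γ / (4*(S+1))) with hδdef
      have hδpos : 0 < δ := lt_min one_pos (by positivity)
      have hδ1 : δ ≤ 1 := min_le_left _ _
      have hδ2 : δ ≤ γ / (4*(S+1)) := min_le_right _ _
      set F : C(Set.Icc (-‖R‖) ‖R‖, ℝ) :=
        ⟨fun t => f (t : ℝ), hfcont.comp continuous_subtype_val⟩ with hFdef
      obtain ⟨p, hp⟩ := auxRS_weierstrass (-‖R‖) ‖R‖ F hδpos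
      have hpk : ∀ k, |p.eval (r k) - f (r k)| ≤ δ := by
        intro k
        exact hp ⟨r k, Set.mem_Icc.mpr (abs_le.mp (hrbound k))⟩
      obtain ⟨z, hzV, hz⟩ := hpoly x hx p
      refine ⟨z, hzV, ?_⟩
      -- the difference expansion
      have hei : HasSum (fun k => (e k * ⟪x, ψ k⟫) • φ k) (⟪x, ψ i⟫ • φ i) := by
        have heq : (fun k => (e k * ⟪x, ψ k⟫) • φ k)
            = fun k => if k = i then ⟪x, ψ i⟫ • φ i else 0 := by
          funext k
          by_cases h : k = i
          · subst h; simp [he]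
          · simp [he, h]
        rw [heq]
        exact hasSum_ite_eq i _
      have hdiff : HasSum (fun k => ((p.eval (r k) - e k) * ⟪x, ψ k⟫) • φ k)
          (z - ⟪x, ψ i⟫ • φ i) := by
        have h := hz.sub hei
        have heq : (fun k => (p.eval (r k) * ⟪x, ψ k⟫) • φ k - (e k * ⟪x, ψ k⟫) • φ k)
            = fun k => ((p.eval (r k) - e k) * ⟪x, ψ k⟫) • φ k := by
          funext k
          rw [← sub_smul, ← sub_mul]
        rwa [heq] at h
      -- pointwise bounds
      have hptwise1 : ∀ k, ((p.eval (r k) - f (r k)) * ⟪x, ψ k⟫)^2 ≤ δ^2 * ⟪x, ψ k⟫^2 := by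
        intro k
        have h1 : (p.eval (r k) - f (r k))^2 ≤ δ^2 := by
          have h2 := pow_le_pow_left₀ (abs_nonneg _) (hpk k) 2
          rwa [sq_abs] at h2
        rw [mul_pow]
        exact mul_le_mul_of_nonneg_right h1 (sq_nonneg _)
      have hptwise2 : ∀ k, ((f (r k) - e k) * ⟪x, ψ k⟫)^2
          ≤ (fun k => if k < N then 0 else ⟪x, ψ k⟫^2) k := by
        intro k
        simp only []
        by_cases hk : k < N
        · rw [if_pos hk]
          by_cases hki : k = i
          · subst hki
            rw [hfi, show e k = 1 from if_pos rfl]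
            simp
          · have hk' : k ∈ (Finset.range N).erase i :=
              Finset.mem_erase.mpr ⟨hki, Finset.mem_range.mpr hk⟩
            rw [hfz (r k) (hηle k hk'), show e k = 0 from if_neg hki]
            simp
        · rw [if_neg hk]
          have hki : k ≠ i := fun h => hk (h ▸ hiN)
          have h1 : (f (r k))^2 ≤ 1 := by nlinarith [hf0 (r k), hf1 (r k)]
          calc ((f (r k) - e k) * ⟪x, ψ k⟫)^2
              = (f (r k))^2 * ⟪x, ψ k⟫^2 := by
                rw [show e k = 0 from if_neg hki, sub_zero, mul_pow]
            _ ≤ 1 * ⟪x, ψ k⟫^2 := mul_le_mul_of_nonneg_right h1 (sq_nonneg _)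
            _ = ⟪x, ψ k⟫^2 := one_mul _
      have hsum1 : Summable (fun k => ((p.eval (r k) - f (r k)) * ⟪x, ψ k⟫)^2) :=
        Summable.of_nonneg_of_le (fun k => sq_nonneg _) hptwise1 (hSx.mul_left _)
      have hsum2 : Summable (fun k => ((f (r k) - e k) * ⟪x, ψ k⟫)^2) :=
        Summable.of_nonneg_of_le (fun k => sq_nonneg _) hptwise2 hupperfun.summable
      have hsplitpt : ∀ k, ((p.eval (r k) - e k) * ⟪x, ψ k⟫)^2
          ≤ 2*((p.eval (r k) - f (r k)) * ⟪x, ψ k⟫)^2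
            + 2*((f (r k) - e k) * ⟪x, ψ k⟫)^2 := by
        intro k
        nlinarith [sq_nonneg ((p.eval (r k) - f (r k)) * ⟪x, ψ k⟫
          - (f (r k) - e k) * ⟪x, ψ k⟫)]
      have hsumrhs : Summable (fun k => 2*((p.eval (r k) - f (r k)) * ⟪x, ψ k⟫)^2
          + 2*((f (r k) - e k) * ⟪x, ψ k⟫)^2) :=
        (hsum1.mul_left 2).add (hsum2.mul_left 2)
      have hgsum : Summable (fun k => ((p.eval (r k) - e k) * ⟪x, ψ k⟫)^2) :=
        Summable.of_nonneg_of_le (fun k => sq_nonneg _) hsplitpt hsumrhs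
      -- the tsum bounds
      have hA : ∑' k, ((p.eval (r k) - f (r k)) * ⟪x, ψ k⟫)^2 ≤ γ/4 := by
        have h1 : ∑' k, ((p.eval (r k) - f (r k)) * ⟪x, ψ k⟫)^2
            ≤ ∑' k, δ^2 * ⟪x, ψ k⟫^2 :=
          Summable.tsum_le_tsum hptwise1 hsum1 (hSx.mul_left _)
        rw [tsum_mul_left] at h1
        have key1 : δ^2 * S ≤ δ * S := by
          have hh := mul_le_mul_of_nonneg_right hδ1 (mul_nonneg hδpos.le hS0)
          calc δ^2*S = δ*(δ*S) := by ring
            _ ≤ 1*(δ*S) := hh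
            _ = δ*S := one_mul _
        have key2 : δ * S ≤ (γ/(4*(S+1))) * S := mul_le_mul_of_nonneg_right hδ2 hS0
        have key3 : (γ/(4*(S+1))) * S ≤ γ/4 := by
          rw [div_mul_eq_mul_div, div_le_div_iff₀ (by positivity) (by norm_num)]
          nlinarith [hS0, hγ.le]
        linarith
      have hB : ∑' k, ((f (r k) - e k) * ⟪x, ψ k⟫)^2 ≤ γ/4 := by
        have h1 := Summable.tsum_le_tsum hptwise2 hsum2 hupperfun.summable
        rw [hupperfun.tsum_eq] at h1
        linarith
      have hT : ∑' k, ((p.eval (r k) - e k) * ⟪x, ψ k⟫)^2 ≤ γ := by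
        have h1 := Summable.tsum_le_tsum hsplitpt hgsum hsumrhs
        rw [Summable.tsum_add (hsum1.mul_left 2) (hsum2.mul_left 2),
          tsum_mul_left, tsum_mul_left] at h1
        linarith
      exact (hnormSq_le _ _ hdiff hgsum).trans (mul_le_mul_of_nonneg_left hT hM₂.le)
    -- conclude φ i ∈ V
    have hsmulmem : ⟪x, ψ i⟫ • φ i ∈ V := by
      have hmem : ⟪x, ψ i⟫ • φ i ∈ closure (V : Set X) := by
        rw [Metric.mem_closure_iff]
        intro ε hε
        obtain ⟨z, hzV, hz⟩ := main (ε^2/(2*M₂)) (by positivity)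
        refine ⟨z, hzV, ?_⟩
        rw [dist_eq_norm, norm_sub_rev]
        have heq : M₂ * (ε^2/(2*M₂)) = ε^2/2 := by field_simp
        rw [heq] at hz
        nlinarith [norm_nonneg (z - ⟪x, ψ i⟫ • φ i), hε, mul_pos hε hε]
      rwa [hVclosed.closure_eq] at hmem
    have h := V.smul_mem (⟪x, ψ i⟫)⁻¹ hsmulmem
    rwa [smul_smul, inv_mul_cancel₀ hci, one_smul] at h
  -- final assembly
  apply le_antisymm
  · intro x hx
    have hmemspan : ∀ n, (∑ k ∈ Finset.range n, ⟪x, ψ k⟫ • φ k)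
        ∈ Submodule.span ℝ (φ '' {i : ℕ | φ i ∈ V}) := by
      intro n
      refine Submodule.sum_mem _ (fun k _ => ?_)
      by_cases h : ⟪x, ψ k⟫ = 0
      · rw [h, zero_smul]; exact Submodule.zero_mem _
      · exact Submodule.smul_mem _ _ (Submodule.subset_span ⟨k, hkey x hx k h, rfl⟩)
    have hcl : x ∈ closure ((Submodule.span ℝ (φ '' {i : ℕ | φ i ∈ V}) : Submodule ℝ X)
        : Set X) :=
      mem_closure_of_tendsto (htendsto x) (Filter.Eventually.of_forall hmemspan)
    rwa [← Submodule.topologicalClosure_coe] at hcl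
  · refine Submodule.topologicalClosure_minimal _ ?_ hVclosed
    rw [Submodule.span_le]
    rintro y ⟨k, hk, rfl⟩
    exact hk
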